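/- Under the relative-degree-one Lyapunov-design setup, the tracking error is square-integrable and bounded and the parameter estimate is bounded: ∫_0^∞ ‖e(t)‖² dt < ∞, sup_{t ≥ 0} ‖e(t)‖ < ∞, and sup_{t ≥ 0} ‖Θ(t)‖ < ∞ (i.e. e ∈ L² ∩ L^∞ and Θ ∈ L^∞). -/

import Mathlib

open Matrix BigOperators MeasureTheory

lemma sum_sum_eq_dot {m : ℕ} (u v : Fin m → ℝ) (A : Matrix (Fin m) (Fin m) ℝ) :
    ∑ j, ∑ k, u j * (A j k * v k) = u ⬝ᵥ A *ᵥ v := by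
  simp [dotProduct, Matrix.mulVec, Finset.mul_sum]

lemma dot_swap {m : ℕ} (u v : Fin m → ℝ) (A : Matrix (Fin m) (Fin m) ℝ) :
    u ⬝ᵥ A *ᵥ v = v ⬝ᵥ Aᵀ *ᵥ u := by
  rw [← sum_sum_eq_dot, ← sum_sum_eq_dot, Finset.sum_comm]
  apply Finset.sum_congr rfl; intro k _
  apply Finset.sum_congr rfl; intro j _
  simp only [Matrix.transpose_apply]; ring

lemma dot_rows {n m : ℕ} (Ψ : Matrix (Fin n) (Fin m) ℝ) (w : Fin n → ℝ) (v : Fin m → ℝ) :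
    (Ψᵀ *ᵥ w) ⬝ᵥ v = ∑ i, w i * ((Ψ i) ⬝ᵥ v) := by
  simp only [dotProduct, Matrix.mulVec, Matrix.transpose_apply, Finset.sum_mul, Finset.mul_sum]
  rw [Finset.sum_comm]
  apply Finset.sum_congr rfl; intro i _
  apply Finset.sum_congr rfl; intro j _
  ring

lemma posdef_lb {n : ℕ} (hn : 0 < n) {A : Matrix (Fin n) (Fin n) ℝ} (hA : A.PosDef) :
    ∃ c > 0, ∀ x : Fin n → ℝ, c * (∑ j, x j ^ 2) ≤ x ⬝ᵥ A *ᵥ x := by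
  have hcont : Continuous fun x : Fin n → ℝ => x ⬝ᵥ A *ᵥ x := by
    simp only [dotProduct, Matrix.mulVec]
    exact continuous_finset_sum _ fun j _ => (continuous_apply j).mul
      (continuous_finset_sum _ fun k _ => continuous_const.mul (continuous_apply k))
  set Sp : Set (Fin n → ℝ) := {x | ∑ j, x j ^ 2 = 1} with hSp
  have hScl : IsClosed Sp := isClosed_eq (continuous_finset_sum _ fun j _ =>
    (continuous_apply j).pow 2) continuous_const
  have hSb : Bornology.IsBounded Sp := by
    apply Bornology.IsBounded.subset (Metric.isBounded_closedBall (x := (0 : Fin n → ℝ)) (r := 1))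
    intro x hx
    simp only [Metric.mem_closedBall, dist_zero_right]
    rw [pi_norm_le_iff_of_nonneg (by norm_num)]
    intro j
    have h1 : x j ^ 2 ≤ 1 := by
      rw [← hx]
      exact Finset.single_le_sum (f := fun j => x j ^ 2) (fun k _ => sq_nonneg _) (Finset.mem_univ j)
    have h2 : |x j| ≤ 1 := by nlinarith [abs_nonneg (x j), sq_abs (x j)]
    simpa [Real.norm_eq_abs] using h2
  have hScpt : IsCompact Sp := Metric.isCompact_of_isClosed_isBounded hScl hSb
  have hSne : Sp.Nonempty := by
    refine ⟨fun j => if j = ⟨0, hn⟩ then 1 else 0, ?_⟩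
    simp [hSp, Finset.sum_ite_eq']
  obtain ⟨x0, hx0S, hx0min⟩ := hScpt.exists_isMinOn hSne hcont.continuousOn
  have hx0ne : x0 ≠ 0 := by
    intro h
    rw [hSp] at hx0S
    simp [h] at hx0S
  refine ⟨x0 ⬝ᵥ A *ᵥ x0, by simpa using hA.dotProduct_mulVec_pos hx0ne, fun x => ?_⟩
  by_cases hx : x = 0
  · simp [hx]
  · have hs : 0 < ∑ j, x j ^ 2 := by
      obtain ⟨j, hj⟩ := Function.ne_iff.1 hx
      exact Finset.sum_pos' (fun k _ => sq_nonneg _)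
        ⟨j, Finset.mem_univ j, (sq_nonneg _).lt_of_ne (Ne.symm (pow_ne_zero 2 hj))⟩
    set r : ℝ := Real.sqrt (∑ j, x j ^ 2) with hr
    have hrpos : 0 < r := Real.sqrt_pos.2 hs
    have hr2 : r ^ 2 = ∑ j, x j ^ 2 := Real.sq_sqrt hs.le
    set u : Fin n → ℝ := r⁻¹ • x with hu
    have huS : u ∈ Sp := by
      rw [hSp]
      simp only [Set.mem_setOf_eq, hu, Pi.smul_apply, smul_eq_mul, mul_pow, ← Finset.mul_sum]
      rw [← hr2]
      field_simp
    have hux : x = r • u := by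
      rw [hu, smul_smul, mul_inv_cancel₀ hrpos.ne', one_smul]
    have hgu := hx0min huS
    have hexp : x ⬝ᵥ A *ᵥ x = r ^ 2 * (u ⬝ᵥ A *ᵥ u) := by
      rw [hux, Matrix.mulVec_smul, dotProduct_smul, smul_dotProduct]
      simp only [smul_eq_mul]; ring
    rw [hexp, ← hr2]
    have hrr : (0:ℝ) < r ^ 2 := by positivity
    calc x0 ⬝ᵥ A *ᵥ x0 * r ^ 2 ≤ (u ⬝ᵥ A *ᵥ u) * r ^ 2 :=
          mul_le_mul_of_nonneg_right hgu hrr.le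
      _ = r ^ 2 * (u ⬝ᵥ A *ᵥ u) := by ring

lemma frob_triangle {n m : ℕ} (X Y : Matrix (Fin n) (Fin m) ℝ) :
    Real.sqrt (∑ i, ∑ j, (X i j + Y i j) ^ 2) ≤
      Real.sqrt (∑ i, ∑ j, X i j ^ 2) + Real.sqrt (∑ i, ∑ j, Y i j ^ 2) := by
  set E := (EuclideanSpace.equiv (Fin n × Fin m) ℝ).symm with hE
  have key : ∀ Z : Matrix (Fin n) (Fin m) ℝ,
      Real.sqrt (∑ i, ∑ j, Z i j ^ 2) = ‖E (fun p : Fin n × Fin m => Z p.1 p.2)‖ := by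
    intro Z
    rw [EuclideanSpace.norm_eq]
    congr 1
    rw [Fintype.sum_prod_type]
    apply Finset.sum_congr rfl; intro i _
    apply Finset.sum_congr rfl; intro j _
    have : (E (fun p : Fin n × Fin m => Z p.1 p.2)) (i, j) = Z i j := rfl
    rw [this, Real.norm_eq_abs, sq_abs]
  have h := norm_add_le (E (fun p : Fin n × Fin m => X p.1 p.2))
      (E (fun p : Fin n × Fin m => Y p.1 p.2))
  rw [key X, key Y, key (fun i j => X i j + Y i j)]
  rw [← map_add] at h
  exact h

/-- Relative-degree-one Lyapunov design: the tracking error is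
square-integrable and bounded on `[0, ∞)`, and the parameter estimate is
bounded on `[0, ∞)` (`e ∈ L² ∩ L^∞`, `Θ ∈ L^∞`). -/
theorem relative_degree_one_tracking_error_properties
    (N M : ℕ) (hN : 0 < N) (hM : 0 < M)
    (A0 : Matrix (Fin M) (Fin M) ℝ)
    (P Q : Matrix (Fin M) (Fin M) ℝ) (hP : P.PosDef) (hQ : Q.PosDef)
    (hPA : P * A0 + A0ᵀ * P = -Q)
    (Kp S : Matrix (Fin M) (Fin M) ℝ) (hKp : IsUnit Kp.det)
    (hMs : (Kp⁻¹ * S).PosDef)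
    (Θs : Matrix (Fin N) (Fin M) ℝ)
    (ω : ℝ → Fin N → ℝ) (hωc : ∀ i, Continuous fun t => ω t i)
    (e e' : ℝ → Fin M → ℝ)
    (Θ Θ' : ℝ → Matrix (Fin N) (Fin M) ℝ)
    (hed : ∀ t j, HasDerivAt (fun s => e s j) (e' t j) t)
    (hΘd : ∀ t i j, HasDerivAt (fun s => Θ s i j) (Θ' t i j) t)
    (helaw : ∀ t, 0 ≤ t →
      e' t = A0.mulVec (e t) + Kp.mulVec ((Θ t - Θs)ᵀ.mulVec (ω t)))
    (hΘlaw : ∀ t, 0 ≤ t →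
      (Θ' t)ᵀ = -Matrix.vecMulVec (Sᵀ.mulVec (P.mulVec (e t))) (ω t)) :
    IntegrableOn (fun t => ∑ j, (e t j) ^ 2) (Set.Ici (0 : ℝ)) ∧
    (∃ C : ℝ, ∀ t, 0 ≤ t → Real.sqrt (∑ j, (e t j) ^ 2) ≤ C) ∧
    (∃ C : ℝ, ∀ t, 0 ≤ t → Real.sqrt (∑ i, ∑ j, (Θ t i j) ^ 2) ≤ C) := by
  -- matrix algebra preliminaries
  set Minv : Matrix (Fin M) (Fin M) ℝ := (Kp⁻¹ * S)⁻¹ with hMinvdef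
  have hMs_sym : (Kp⁻¹ * S)ᵀ = Kp⁻¹ * S := hMs.isHermitian
  have hMinv_pd : Minv.PosDef := hMs.inv
  have hMinv_sym : Minvᵀ = Minv := by
    rw [hMinvdef, Matrix.transpose_nonsing_inv, hMs_sym]
  have hPsym : Pᵀ = P := hP.isHermitian
  have hMsdet : IsUnit (Kp⁻¹ * S).det := hMs.det_pos.ne'.isUnit
  have hSfac : Kp * (Kp⁻¹ * S) = S := by
    rw [← Matrix.mul_assoc, Matrix.mul_nonsing_inv _ hKp, Matrix.one_mul]
  have hSdet : IsUnit S.det := by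
    rw [← hSfac, Matrix.det_mul]; exact hKp.mul hMsdet
  have hStdet : IsUnit Sᵀ.det := by rwa [Matrix.det_transpose]
  have hKtdet : IsUnit Kpᵀ.det := by rwa [Matrix.det_transpose]
  have hMseq : Kp⁻¹ * S = Sᵀ * (Kpᵀ)⁻¹ := by
    conv_lhs => rw [← hMs_sym]
    rw [Matrix.transpose_mul, Matrix.transpose_nonsing_inv]
  have hKey : Minv * Sᵀ = Kpᵀ := by
    rw [hMinvdef, hMseq, Matrix.mul_inv_rev, Matrix.nonsing_inv_nonsing_inv _ hKtdet,
      Matrix.mul_assoc, Matrix.nonsing_inv_mul _ hStdet, Matrix.mul_one]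
  -- continuity
  have hec : ∀ j, Continuous fun t => e t j := by
    intro j
    have h : Differentiable ℝ fun s => e s j := fun t => (hed t j).differentiableAt
    exact h.continuous
  have hqc : Continuous fun t => e t ⬝ᵥ Q *ᵥ e t := by
    simp only [dotProduct, Matrix.mulVec]
    exact continuous_finset_sum _ fun j _ => (hec j).mul
      (continuous_finset_sum _ fun k _ => continuous_const.mul (hec k))
  have hfc : Continuous fun t => ∑ j, (e t j) ^ 2 :=
    continuous_finset_sum _ fun j _ => (hec j).pow 2
  -- Lyapunov function
  set V : ℝ → ℝ := fun t => (∑ j, ∑ k, e t j * (P j k * e t k)) +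
      ∑ i, ∑ j, ∑ k, (Θ t i j - Θs i j) * (Minv j k * (Θ t i k - Θs i k)) with hVdef
  have hVd : ∀ t, HasDerivAt V
      ((∑ j, ∑ k, (e' t j * (P j k * e t k) + e t j * (P j k * e' t k))) +
       ∑ i, ∑ j, ∑ k, (Θ' t i j * (Minv j k * (Θ t i k - Θs i k)) +
         (Θ t i j - Θs i j) * (Minv j k * Θ' t i k))) t := by
    intro t
    apply HasDerivAt.add
    · apply HasDerivAt.fun_sum; intro j _
      apply HasDerivAt.fun_sum; intro k _
      exact (hed t j).mul ((hed t k).const_mul (P j k))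
    · apply HasDerivAt.fun_sum; intro i _
      apply HasDerivAt.fun_sum; intro j _
      apply HasDerivAt.fun_sum; intro k _
      exact ((hΘd t i j).sub_const (Θs i j)).mul
        (((hΘd t i k).sub_const (Θs i k)).const_mul (Minv j k))
  -- the derivative equals -eᵀQe for t ≥ 0
  have hW : ∀ t, 0 ≤ t →
      ((∑ j, ∑ k, (e' t j * (P j k * e t k) + e t j * (P j k * e' t k))) +
       ∑ i, ∑ j, ∑ k, (Θ' t i j * (Minv j k * (Θ t i k - Θs i k)) +
         (Θ t i j - Θs i j) * (Minv j k * Θ' t i k))) = -(e t ⬝ᵥ Q *ᵥ e t) := by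
    intro t ht
    have heq := helaw t ht
    set u : Fin M → ℝ := e t with hu
    set u' : Fin M → ℝ := e' t with hu'
    set w : Fin N → ℝ := ω t with hw
    set Ψ : Matrix (Fin N) (Fin M) ℝ := Θ t - Θs with hΨ
    have hΨapp : ∀ i k, Θ t i k - Θs i k = Ψ i k := fun i k => rfl
    set v : Fin M → ℝ := (Kpᵀ * P) *ᵥ u with hv
    have hDeq : ∀ i, Θ' t i = (-(w i)) • (Sᵀ *ᵥ (P *ᵥ u)) := by
      intro i
      funext j
      have h := congrFun (congrFun (hΘlaw t ht) j) i
      simp only [Matrix.transpose_apply, Matrix.neg_apply, Matrix.vecMulVec_apply] at h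
      rw [h]; simp [mul_comm]; rfl
    -- convert to dot products
    have h1 : (∑ j, ∑ k, (u' j * (P j k * u k) + u j * (P j k * u' k)))
        = u' ⬝ᵥ P *ᵥ u + u ⬝ᵥ P *ᵥ u' := by
      rw [← sum_sum_eq_dot u' u P, ← sum_sum_eq_dot u u' P, ← Finset.sum_add_distrib]
      apply Finset.sum_congr rfl; intro j _
      rw [← Finset.sum_add_distrib]
    have h2 : (∑ i, ∑ j, ∑ k, (Θ' t i j * (Minv j k * (Θ t i k - Θs i k)) +
          (Θ t i j - Θs i j) * (Minv j k * Θ' t i k)))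
        = ∑ i, ((Θ' t i) ⬝ᵥ Minv *ᵥ (Ψ i) + (Ψ i) ⬝ᵥ Minv *ᵥ (Θ' t i)) := by
      apply Finset.sum_congr rfl; intro i _
      simp only [hΨapp]
      rw [← sum_sum_eq_dot (Θ' t i) (Ψ i) Minv, ← sum_sum_eq_dot (Ψ i) (Θ' t i) Minv,
        ← Finset.sum_add_distrib]
      apply Finset.sum_congr rfl; intro j _
      rw [← Finset.sum_add_distrib]
    rw [h1, h2]
    -- rows of the parameter part
    have hrow : ∀ i, (Θ' t i) ⬝ᵥ Minv *ᵥ (Ψ i) + (Ψ i) ⬝ᵥ Minv *ᵥ (Θ' t i)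
        = 2 * (-(w i) * ((Ψ i) ⬝ᵥ v)) := by
      intro i
      have hd1 : (Θ' t i) ⬝ᵥ Minv *ᵥ (Ψ i) = (Ψ i) ⬝ᵥ Minv *ᵥ (Θ' t i) := by
        rw [dot_swap, hMinv_sym]
      have hd2 : Minv *ᵥ (Θ' t i) = (-(w i)) • v := by
        rw [hDeq i, Matrix.mulVec_smul, Matrix.mulVec_mulVec, Matrix.mulVec_mulVec, hKey, hv]
      rw [hd1, hd2, dotProduct_smul]
      simp only [smul_eq_mul]; ring
    -- the error part
    have hS1 : u' ⬝ᵥ P *ᵥ u + u ⬝ᵥ P *ᵥ u'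
        = -(u ⬝ᵥ Q *ᵥ u) + 2 * ((Ψᵀ *ᵥ w) ⬝ᵥ v) := by
      have hswap : u' ⬝ᵥ P *ᵥ u = u ⬝ᵥ P *ᵥ u' := by rw [dot_swap, hPsym]
      rw [hswap, heq, Matrix.mulVec_add, dotProduct_add]
      have ha : u ⬝ᵥ P *ᵥ (A0 *ᵥ u) = u ⬝ᵥ (P * A0) *ᵥ u := by
        rw [Matrix.mulVec_mulVec]
      have hb : u ⬝ᵥ P *ᵥ (Kp *ᵥ (Ψᵀ *ᵥ w)) = (Ψᵀ *ᵥ w) ⬝ᵥ v := by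
        rw [Matrix.mulVec_mulVec, dot_swap, Matrix.transpose_mul, hPsym, hv]
      rw [ha, hb]
      have hq2 : u ⬝ᵥ (P * A0) *ᵥ u + u ⬝ᵥ (P * A0) *ᵥ u = -(u ⬝ᵥ Q *ᵥ u) := by
        conv_lhs => rw [show u ⬝ᵥ (P * A0) *ᵥ u + u ⬝ᵥ (P * A0) *ᵥ u
          = u ⬝ᵥ (P * A0) *ᵥ u + u ⬝ᵥ (P * A0)ᵀ *ᵥ u from by rw [← dot_swap]]
        rw [Matrix.transpose_mul, hPsym, ← dotProduct_add, ← Matrix.add_mulVec, hPA,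
          Matrix.neg_mulVec, dotProduct_neg]
      ring_nf
      ring_nf at hq2
      linarith [hq2]
    rw [hS1, Finset.sum_congr rfl (fun i _ => hrow i), dot_rows]
    rw [Finset.mul_sum]
    have hcancel : ∀ i : Fin N, 2 * (w i * ((Ψ i) ⬝ᵥ v)) + 2 * (-(w i) * ((Ψ i) ⬝ᵥ v)) = 0 := by
      intro i; ring
    rw [add_assoc, ← Finset.sum_add_distrib]
    rw [Finset.sum_congr rfl (fun i _ => hcancel i), Finset.sum_const, smul_zero, add_zero]
  have hVd' : ∀ t, 0 ≤ t → HasDerivAt V (-(e t ⬝ᵥ Q *ᵥ e t)) t := by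
    intro t ht
    have h := hVd t
    rwa [hW t ht] at h
  have hVrep : ∀ t, V t = (e t ⬝ᵥ P *ᵥ e t) +
      ∑ i, ((Θ t - Θs) i ⬝ᵥ Minv *ᵥ ((Θ t - Θs) i)) := by
    intro t
    show (∑ j, ∑ k, e t j * (P j k * e t k)) + _ = _
    congr 1
    · exact sum_sum_eq_dot (e t) (e t) P
    · exact Finset.sum_congr rfl fun i _ => sum_sum_eq_dot _ _ Minv
  obtain ⟨cP, hcP, hcPs⟩ := posdef_lb hM hP
  obtain ⟨cQ, hcQ, hcQs⟩ := posdef_lb hM hQ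
  obtain ⟨cM2, hcM, hcMs⟩ := posdef_lb hM hMinv_pd
  have hPnn : ∀ x : Fin M → ℝ, 0 ≤ x ⬝ᵥ P *ᵥ x := fun x =>
    le_trans (mul_nonneg hcP.le (Finset.sum_nonneg fun j _ => sq_nonneg _)) (hcPs x)
  have hQnn : ∀ x : Fin M → ℝ, 0 ≤ x ⬝ᵥ Q *ᵥ x := fun x =>
    le_trans (mul_nonneg hcQ.le (Finset.sum_nonneg fun j _ => sq_nonneg _)) (hcQs x)
  have hMnn : ∀ x : Fin M → ℝ, 0 ≤ x ⬝ᵥ Minv *ᵥ x := fun x =>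
    le_trans (mul_nonneg hcM.le (Finset.sum_nonneg fun j _ => sq_nonneg _)) (hcMs x)
  have hVnn : ∀ t, 0 ≤ V t := by
    intro t
    rw [hVrep]
    exact add_nonneg (hPnn _) (Finset.sum_nonneg fun i _ => hMnn _)
  have hFTC : ∀ T, 0 ≤ T → (∫ s in (0:ℝ)..T, -(e s ⬝ᵥ Q *ᵥ e s)) = V T - V 0 := by
    intro T hT
    apply intervalIntegral.integral_eq_sub_of_hasDerivAt
    · intro s hs
      rw [Set.uIcc_of_le hT] at hs
      exact hVd' s hs.1
    · exact (hqc.neg).intervalIntegrable 0 T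
  have hVle : ∀ T, 0 ≤ T → V T ≤ V 0 := by
    intro T hT
    have h := hFTC T hT
    rw [intervalIntegral.integral_neg] at h
    have h2 : 0 ≤ ∫ s in (0:ℝ)..T, e s ⬝ᵥ Q *ᵥ e s :=
      intervalIntegral.integral_nonneg hT (fun s _ => hQnn (e s))
    linarith
  have hIB : ∀ T, 0 ≤ T → (∫ s in (0:ℝ)..T, (∑ j, e s j ^ 2)) ≤ V 0 / cQ := by
    intro T hT
    rw [le_div_iff₀ hcQ]
    have hmono : (∫ s in (0:ℝ)..T, cQ * (∑ j, e s j ^ 2)) ≤ ∫ s in (0:ℝ)..T, e s ⬝ᵥ Q *ᵥ e s := by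
      apply intervalIntegral.integral_mono_on hT
        ((continuous_const.mul hfc).intervalIntegrable 0 T)
        (hqc.intervalIntegrable 0 T)
      intro s _
      exact hcQs (e s)
    rw [intervalIntegral.integral_const_mul] at hmono
    have h := hFTC T hT
    rw [intervalIntegral.integral_neg] at h
    have h3 := hVnn T
    nlinarith
  have hIoi : IntegrableOn (fun t => ∑ j, (e t j) ^ 2) (Set.Ioi (0:ℝ)) := by
    apply MeasureTheory.integrableOn_Ioi_of_intervalIntegral_norm_bounded (V 0 / cQ) (0:ℝ)
      (fun T : ℝ => hfc.integrableOn_Ioc) Filter.tendsto_id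
    filter_upwards [Filter.eventually_ge_atTop (0:ℝ)] with T hT
    have hnorm : (∫ s in (0:ℝ)..T, ‖∑ j, e s j ^ 2‖) = ∫ s in (0:ℝ)..T, ∑ j, e s j ^ 2 := by
      apply intervalIntegral.integral_congr
      intro s _
      exact Real.norm_of_nonneg (Finset.sum_nonneg fun j _ => sq_nonneg _)
    simp only [id_eq]
    rw [hnorm]
    exact hIB T hT
  refine ⟨?_, ⟨Real.sqrt (V 0 / cP), ?_⟩,
    ⟨Real.sqrt (V 0 / cM2) + Real.sqrt (∑ i, ∑ j, Θs i j ^ 2), ?_⟩⟩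
  · rwa [integrableOn_Ici_iff_integrableOn_Ioi]
  · intro t ht
    apply Real.sqrt_le_sqrt
    rw [le_div_iff₀ hcP]
    calc (∑ j, e t j ^ 2) * cP = cP * ∑ j, e t j ^ 2 := mul_comm _ _
      _ ≤ e t ⬝ᵥ P *ᵥ e t := hcPs (e t)
      _ ≤ V t := by
          rw [hVrep t]
          exact le_add_of_nonneg_right (Finset.sum_nonneg fun i _ => hMnn _)
      _ ≤ V 0 := hVle t ht
  · intro t ht
    have hsq : ∑ i, ∑ j, ((Θ t - Θs) i j) ^ 2 ≤ V 0 / cM2 := by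
      rw [le_div_iff₀ hcM]
      calc (∑ i, ∑ j, ((Θ t - Θs) i j) ^ 2) * cM2
          = ∑ i, cM2 * ∑ j, ((Θ t - Θs) i j) ^ 2 := by
            rw [Finset.sum_mul]
            apply Finset.sum_congr rfl; intro i _; ring
        _ ≤ ∑ i, ((Θ t - Θs) i ⬝ᵥ Minv *ᵥ ((Θ t - Θs) i)) :=
            Finset.sum_le_sum fun i _ => hcMs _
        _ ≤ V t := by
            rw [hVrep t]
            exact le_add_of_nonneg_left (hPnn _)
        _ ≤ V 0 := hVle t ht
    have htri := frob_triangle (Θ t - Θs) Θs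
    have hent : ∀ i j, (Θ t - Θs) i j + Θs i j = Θ t i j := by
      intro i j; simp [Matrix.sub_apply]
    simp only [hent] at htri
    calc Real.sqrt (∑ i, ∑ j, (Θ t i j) ^ 2)
        ≤ Real.sqrt (∑ i, ∑ j, ((Θ t - Θs) i j) ^ 2)
            + Real.sqrt (∑ i, ∑ j, Θs i j ^ 2) := htri
      _ ≤ Real.sqrt (V 0 / cM2) + Real.sqrt (∑ i, ∑ j, Θs i j ^ 2) :=
            add_le_add_left (Real.sqrt_le_sqrt hsq) _
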